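/- Reduction of constant-domain satisfiability to decreasing-domain satisfiability: let φ be a one-variable first-order modal formula with counting quantifiers, m = md(φ), E a unary predicate not occurring in φ, and let N ≥ 1 be a natural number such that if φ is satisfiable with respect to QK then φ is satisfiable in a constant domain model whose domain D has |D| ≤ N. Let ζ := ζ_exp ∧ ζ_dec ∧ ∀x□^{≤m}∀x(∃[≤N]x ⊤(x) ∧ ¬∃[≤N−1]x ⊤(x)), where ⊤(x) := P₀(x) ∨ ¬P₀(x) for a predicate P₀. Then φ is satisfiable with respect to QK if and only if E(x) ∧ ζ ∧ φ^E is satisfiable with respect to QK^dec. -/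

import Mathlib

/-! Syntax of one-variable first-order modal formulas with counting quantifiers:
    φ ::= P(x) | ¬φ | (φ∧φ) | ◇φ | ∃[≤c]x φ. -/

inductive Fml : Type
  | atom : ℕ → Fml
  | neg : Fml → Fml
  | conj : Fml → Fml → Fml
  | dia : Fml → Fml
  | countLe : ℕ → Fml → Fml
deriving DecidableEq

namespace Fml

/-- Subformulas. -/
def sub : Fml → Finset Fml
  | atom n => {atom n}
  | neg ψ => insert (neg ψ) ψ.sub
  | conj ψ χ => insert (conj ψ χ) (ψ.sub ∪ χ.sub)
  | dia ψ => insert (dia ψ) ψ.sub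
  | countLe c ψ => insert (countLe c ψ) ψ.sub

/-- Modal depth. -/
def md : Fml → ℕ
  | atom _ => 0
  | neg ψ => ψ.md
  | conj ψ χ => max ψ.md χ.md
  | dia ψ => ψ.md + 1
  | countLe _ ψ => ψ.md

/-- Capacity: the largest counting-quantifier subscript (0 if none). -/
def cpt : Fml → ℕ
  | atom _ => 0
  | neg ψ => ψ.cpt
  | conj ψ χ => max ψ.cpt χ.cpt
  | dia ψ => ψ.cpt
  | countLe c ψ => max c ψ.cpt

/-- Length of the formula as a string, counting subscripts written in binary. -/
def len : Fml → ℕ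
  | atom _ => 1
  | neg ψ => ψ.len + 1
  | conj ψ χ => ψ.len + χ.len + 1
  | dia ψ => ψ.len + 1
  | countLe c ψ => ψ.len + Nat.size c + 1

/-- Predicate symbols occurring in a formula. -/
def preds : Fml → Finset ℕ
  | atom n => {n}
  | neg ψ => ψ.preds
  | conj ψ χ => ψ.preds ∪ χ.preds
  | dia ψ => ψ.preds
  | countLe _ ψ => ψ.preds

def imp (ψ χ : Fml) : Fml := neg (conj ψ (neg χ))
def or (ψ χ : Fml) : Fml := neg (conj (neg ψ) (neg χ))
def iff (ψ χ : Fml) : Fml := conj (ψ.imp χ) (χ.imp ψ)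
def box (ψ : Fml) : Fml := neg (dia (neg ψ))
/-- `∃x ψ := ¬∃[≤0]x ψ`. -/
def ex (ψ : Fml) : Fml := neg (countLe 0 ψ)
/-- `∀x ψ := ∃[≤0]x ¬ψ`. -/
def fal (ψ : Fml) : Fml := countLe 0 (neg ψ)
/-- A tautology. -/
def top : Fml := neg (conj (atom 0) (neg (atom 0)))

/-- `boxIter n ψ` is `□^n ψ`. -/
def boxIter : ℕ → Fml → Fml
  | 0, ψ => ψ
  | n+1, ψ => (boxIter n ψ).box

/-- `boxLe m ψ` is `⋀_{k=0}^{m} □^k ψ`. -/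
def boxLe : ℕ → Fml → Fml
  | 0, ψ => ψ
  | n+1, ψ => conj (boxLe n ψ) (boxIter (n+1) ψ)

end Fml

/-- A first-order Kripke model `M = (W,R,D,d,I)` (unary predicates suffice for the
one-variable fragment). -/
structure KModel where
  W : Type
  R : W → W → Prop
  D : Type
  Dne : Nonempty D
  dom : W → Set D
  domNe : ∀ w, (dom w).Nonempty
  I : W → ℕ → Set D
  Isub : ∀ w p, I w p ⊆ dom w

/-- Satisfaction `M,w ⊨^a φ`. -/
def KModel.sat (M : KModel) : Fml → M.W → M.D → Prop
  | .atom p, w, a => a ∈ M.I w p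
  | .neg ψ, w, a => ¬ M.sat ψ w a
  | .conj ψ χ, w, a => M.sat ψ w a ∧ M.sat χ w a
  | .dia ψ, w, a => ∃ v, M.R w v ∧ M.sat ψ v a
  | .countLe c ψ, w, _ => {b | b ∈ M.dom w ∧ M.sat ψ w b}.encard ≤ (c : ℕ∞)

def KModel.constDom (M : KModel) : Prop := ∀ u v, M.dom u = M.dom v
def KModel.expDom (M : KModel) : Prop := ∀ u v, M.R u v → M.dom u ⊆ M.dom v
def KModel.decDom (M : KModel) : Prop := ∀ u v, M.R u v → M.dom v ⊆ M.dom u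

/-- Satisfiability with respect to QK (constant domains). -/
def satQK (φ : Fml) : Prop :=
  ∃ M : KModel, M.constDom ∧ ∃ w a, a ∈ M.dom w ∧ M.sat φ w a

/-- Satisfiability with respect to QK^exp (expanding domains). -/
def satQKexp (φ : Fml) : Prop :=
  ∃ M : KModel, M.expDom ∧ ∃ w a, a ∈ M.dom w ∧ M.sat φ w a

/-- Satisfiability with respect to QK^dec (decreasing domains). -/
def satQKdec (φ : Fml) : Prop :=
  ∃ M : KModel, M.decDom ∧ ∃ w a, a ∈ M.dom w ∧ M.sat φ w a

/-- `R` is the immediate-successor (parent–child) relation of a rooted irreflexive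
intransitive tree of depth ≤ m with root `r`. -/
def IsTreeOfDepth {W : Type} (R : W → W → Prop) (r : W) (m : ℕ) : Prop :=
  ∃ depth : W → ℕ,
    depth r = 0 ∧ (∀ w, depth w ≤ m) ∧
    (∀ u v, R u v → depth v = depth u + 1) ∧
    (∀ v, v ≠ r → ∃! u, R u v) ∧
    (∀ v, Relation.ReflTransGen R r v)

/-- Relativization φ^E of a formula to a fresh predicate E. -/
def relE (E : ℕ) : Fml → Fml
  | .atom p => .atom p
  | .neg ψ => .neg (relE E ψ)
  | .conj ψ χ => .conj (relE E ψ) (relE E χ)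
  | .dia ψ => .dia (relE E ψ)
  | .countLe c ψ => .countLe c (.conj (.atom E) (relE E ψ))

/-- `ζ_exp := □^{≤m} ∀x (E(x) → □E(x))`. -/
def zetaExp (E m : ℕ) : Fml :=
  Fml.boxLe m (Fml.fal ((Fml.atom E).imp (Fml.box (Fml.atom E))))

/-- `ζ_dec := ∀x □^{≤m} (◇E(x) → E(x))`. -/
def zetaDec (E m : ℕ) : Fml :=
  Fml.fal (Fml.boxLe m ((Fml.dia (Fml.atom E)).imp (Fml.atom E)))

/-- `⊤(x) := P₀(x) ∨ ¬P₀(x)`. -/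
def topP (P₀ : ℕ) : Fml := (Fml.atom P₀).or (Fml.neg (Fml.atom P₀))

/-- `∀x □^{≤m} ∀x (∃[≤N]x ⊤(x) ∧ ¬∃[≤N−1]x ⊤(x))`. -/
def zetaSize (P₀ m N : ℕ) : Fml :=
  Fml.fal (Fml.boxLe m (Fml.fal
    (Fml.conj (Fml.countLe N (topP P₀)) (Fml.neg (Fml.countLe (N - 1) (topP P₀))))))

/-- `ζ := ζ_exp ∧ ζ_dec ∧ ∀x□^{≤m}∀x(∃[≤N]x ⊤(x) ∧ ¬∃[≤N−1]x ⊤(x))`. -/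
def zeta78 (E P₀ m N : ℕ) : Fml :=
  Fml.conj (zetaExp E m) (Fml.conj (zetaDec E m) (zetaSize P₀ m N))

namespace KModel

lemma sat_atom (M : KModel) {p : ℕ} {w : M.W} {a : M.D} :
    M.sat (Fml.atom p) w a ↔ a ∈ M.I w p := Iff.rfl

lemma sat_neg' (M : KModel) {ψ : Fml} {w : M.W} {a : M.D} :
    M.sat ψ.neg w a ↔ ¬ M.sat ψ w a := Iff.rfl

lemma sat_conj (M : KModel) {ψ χ : Fml} {w : M.W} {a : M.D} :
    M.sat (ψ.conj χ) w a ↔ M.sat ψ w a ∧ M.sat χ w a := Iff.rfl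

lemma sat_dia (M : KModel) {ψ : Fml} {w : M.W} {a : M.D} :
    M.sat ψ.dia w a ↔ ∃ v, M.R w v ∧ M.sat ψ v a := Iff.rfl

lemma sat_countLe (M : KModel) {c : ℕ} {ψ : Fml} {w : M.W} {a : M.D} :
    M.sat (Fml.countLe c ψ) w a ↔
      {b | b ∈ M.dom w ∧ M.sat ψ w b}.encard ≤ (c : ℕ∞) := Iff.rfl

end KModel
namespace KModel

lemma sat_imp (M : KModel) {ψ χ : Fml} {w : M.W} {a : M.D} :
    M.sat (ψ.imp χ) w a ↔ (M.sat ψ w a → M.sat χ w a) := by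
  simp only [Fml.imp, KModel.sat]; tauto

lemma sat_box (M : KModel) {ψ : Fml} {w : M.W} {a : M.D} :
    M.sat ψ.box w a ↔ ∀ v, M.R w v → M.sat ψ v a := by
  simp only [Fml.box, KModel.sat]; push_neg; simp

lemma sat_fal (M : KModel) {ψ : Fml} {w : M.W} {a : M.D} :
    M.sat ψ.fal w a ↔ ∀ b ∈ M.dom w, M.sat ψ w b := by
  simp only [Fml.fal, KModel.sat, Nat.cast_zero, nonpos_iff_eq_zero,
    Set.encard_eq_zero, Set.eq_empty_iff_forall_notMem, Set.mem_setOf_eq, not_and, not_not]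

def reachN (M : KModel) : ℕ → M.W → M.W → Prop
  | 0, w, v => v = w
  | k+1, w, v => ∃ u, M.R w u ∧ M.reachN k u v

lemma reachN_succ_iff (M : KModel) (k : ℕ) (w v : M.W) :
    M.reachN (k+1) w v ↔ ∃ u, M.reachN k w u ∧ M.R u v := by
  induction k generalizing w with
  | zero => simp [reachN]
  | succ k ih =>
    constructor
    · rintro ⟨u, hwu, huv⟩
      rcases (ih u).1 huv with ⟨t, ht, htv⟩
      exact ⟨t, ⟨u, hwu, ht⟩, htv⟩
    · rintro ⟨t, ⟨u, hwu, ht⟩, htv⟩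
      exact ⟨u, hwu, (ih u).2 ⟨t, ht, htv⟩⟩

lemma sat_boxIter (M : KModel) {ψ : Fml} (n : ℕ) {w : M.W} {a : M.D} :
    M.sat (Fml.boxIter n ψ) w a ↔ ∀ v, M.reachN n w v → M.sat ψ v a := by
  induction n generalizing w with
  | zero =>
    simp only [Fml.boxIter, reachN]
    exact ⟨fun h v hv => hv ▸ h, fun h => h w rfl⟩
  | succ n ih =>
    simp only [Fml.boxIter, M.sat_box]
    constructor
    · rintro h v ⟨u, hwu, huv⟩
      exact (ih).1 (h u hwu) v huv
    · intro h u hwu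
      exact (ih).2 (fun v huv => h v ⟨u, hwu, huv⟩)

lemma sat_boxLe (M : KModel) {ψ : Fml} (n : ℕ) {w : M.W} {a : M.D} :
    M.sat (Fml.boxLe n ψ) w a ↔ ∀ k, k ≤ n → ∀ v, M.reachN k w v → M.sat ψ v a := by
  induction n with
  | zero =>
    simp only [Fml.boxLe, Nat.le_zero]
    constructor
    · intro h k hk v hv
      subst hk
      have hv' : v = w := hv
      exact hv' ▸ h
    · intro h
      exact h 0 rfl w rfl
  | succ n ih =>
    have hconj : M.sat (Fml.boxLe (n+1) ψ) w a ↔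
        M.sat (Fml.boxLe n ψ) w a ∧ M.sat (Fml.boxIter (n+1) ψ) w a := Iff.rfl
    rw [hconj, ih, M.sat_boxIter]
    constructor
    · rintro ⟨h1, h2⟩ k hk v hv
      rcases Nat.lt_or_ge k (n+1) with h | h
      · exact h1 k (Nat.lt_succ_iff.mp h) v hv
      · have hkn : k = n+1 := le_antisymm hk h
        subst hkn; exact h2 v hv
    · intro h
      exact ⟨fun k hk v hv => h k (hk.trans (Nat.le_succ n)) v hv,
             fun v hv => h (n+1) le_rfl v hv⟩

lemma reachN_dom_subset (M : KModel) (hdec : M.decDom) :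
    ∀ (k : ℕ) (w v : M.W), M.reachN k w v → M.dom v ⊆ M.dom w := by
  intro k
  induction k with
  | zero =>
    intro w v hv
    have hv' : v = w := hv
    exact hv' ▸ subset_rfl
  | succ k ih =>
    rintro w v ⟨u, hwu, huv⟩
    exact (ih u v huv).trans (hdec w u hwu)

lemma sat_topP (M : KModel) (P₀ : ℕ) (w : M.W) (a : M.D) : M.sat (topP P₀) w a := by
  simp only [topP, Fml.or, KModel.sat]; tauto

end KModel

lemma encard_subtype_setOf {α : Type} (A : Set α) (P : α → Prop) :
    {b : ↥A | P ↑b}.encard = {b : α | b ∈ A ∧ P b}.encard := by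
  rw [← Subtype.val_injective.encard_image {b : ↥A | P ↑b}]
  congr 1
  ext b
  constructor
  · rintro ⟨⟨x, hx⟩, hP, rfl⟩; exact ⟨hx, hP⟩
  · rintro ⟨hA, hP⟩; exact ⟨⟨b, hA⟩, hP, rfl⟩
/-- Padded constant-domain model for the forward direction. -/
@[reducible] def padModel (M : KModel) (E : ℕ) (s : Set M.D) (hne : s.Nonempty) (j : ℕ) : KModel where
  W := M.W
  R := M.R
  D := ↥s ⊕ Fin j
  Dne := ⟨Sum.inl ⟨hne.some, hne.some_mem⟩⟩
  dom := fun _ => Set.univ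
  domNe := fun _ => ⟨Sum.inl ⟨hne.some, hne.some_mem⟩, trivial⟩
  I := fun v p => if p = E then Set.range Sum.inl
      else Sum.inl '' {b : ↥s | (b : M.D) ∈ M.I v p}
  Isub := fun _ _ => Set.subset_univ _

lemma padModel_I_E (M : KModel) (E : ℕ) (s : Set M.D) (hne : s.Nonempty) (j : ℕ) (v : M.W) :
    (padModel M E s hne j).I v E = Set.range Sum.inl := if_pos rfl

lemma padModel_I_ne (M : KModel) (E : ℕ) (s : Set M.D) (hne : s.Nonempty) (j : ℕ) (v : M.W)
    {p : ℕ} (hp : p ≠ E) :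
    (padModel M E s hne j).I v p = Sum.inl '' {b : ↥s | (b : M.D) ∈ M.I v p} := if_neg hp

lemma padModel_sat (M : KModel) (E : ℕ) (s : Set M.D) (hne : s.Nonempty) (j : ℕ)
    (hdom : ∀ v, M.dom v = s) :
    ∀ ψ : Fml, E ∉ ψ.preds → ∀ (v : M.W) (b : ↥s),
      (padModel M E s hne j).sat (relE E ψ) v (Sum.inl b) ↔ M.sat ψ v (b : M.D) := by
  intro ψ
  induction ψ with
  | atom p =>
    intro hp v b
    have hpE : p ≠ E := fun h => hp (by simp [Fml.preds, h])
    rw [relE, KModel.sat_atom, KModel.sat_atom, padModel_I_ne M E s hne j v hpE]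
    constructor
    · rintro ⟨x, hx, hxb⟩
      have hx' : x = b := Sum.inl_injective hxb
      exact hx' ▸ hx
    · intro h; exact ⟨b, h, rfl⟩
  | neg ψ ih =>
    intro hp v b
    have hp' : E ∉ ψ.preds := hp
    exact not_congr (ih hp' v b)
  | conj ψ χ ih1 ih2 =>
    intro hp v b
    simp only [Fml.preds, Finset.mem_union] at hp
    push_neg at hp
    exact and_congr (ih1 hp.1 v b) (ih2 hp.2 v b)
  | dia ψ ih =>
    intro hp v b
    have hp' : E ∉ ψ.preds := hp
    exact exists_congr fun v' => and_congr_right fun _ => ih hp' v' b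
  | countLe c ψ ih =>
    intro hp v b
    have hp' : E ∉ ψ.preds := hp
    rw [relE, KModel.sat_countLe, KModel.sat_countLe]
    have hset : {d : (padModel M E s hne j).D | d ∈ (padModel M E s hne j).dom v ∧
        (padModel M E s hne j).sat (Fml.conj (Fml.atom E) (relE E ψ)) v d}
        = Sum.inl '' {b' : ↥s | M.sat ψ v (b' : M.D)} := by
      ext d
      simp only [Set.mem_setOf_eq, Set.mem_image, KModel.sat_conj, KModel.sat_atom,
        padModel_I_E M E s hne j v, Set.mem_range]
      constructor
      · rintro ⟨-, ⟨x, rfl⟩, hsat⟩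
        exact ⟨x, (ih hp' v x).1 hsat, rfl⟩
      · rintro ⟨x, hx, rfl⟩
        exact ⟨trivial, ⟨x, rfl⟩, (ih hp' v x).2 hx⟩
    rw [hset, Sum.inl_injective.encard_image, encard_subtype_setOf, hdom v]
/-- Restriction model for the backward direction: constant domain `A`. -/
@[reducible] def restrModel (M : KModel) (A : Set M.D) (hne : A.Nonempty) : KModel where
  W := M.W
  R := M.R
  D := ↥A
  Dne := ⟨⟨hne.some, hne.some_mem⟩⟩
  dom := fun _ => Set.univ
  domNe := fun _ => ⟨⟨hne.some, hne.some_mem⟩, trivial⟩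
  I := fun v p => {b : ↥A | (b : M.D) ∈ M.I v p}
  Isub := fun _ _ => Set.subset_univ _

lemma restrModel_sat (M : KModel) (A : Set M.D) (hne : A.Nonempty) (E m : ℕ) (w : M.W)
    (hIE : ∀ k v, k ≤ m → M.reachN k w v → M.I v E = A) :
    ∀ (ψ : Fml) (k : ℕ) (v : M.W), ψ.md + k ≤ m → M.reachN k w v → ∀ b : ↥A,
      (restrModel M A hne).sat ψ v b ↔ M.sat (relE E ψ) v (b : M.D) := by
  intro ψ
  induction ψ with
  | atom p =>
    intro k v _ _ b
    exact Iff.rfl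
  | neg ψ ih =>
    intro k v hk hv b
    exact not_congr (ih k v hk hv b)
  | conj ψ χ ih1 ih2 =>
    intro k v hk hv b
    have h1 : ψ.md + k ≤ m := by simp only [Fml.md] at hk; omega
    have h2 : χ.md + k ≤ m := by simp only [Fml.md] at hk; omega
    exact and_congr (ih1 k v h1 hv b) (ih2 k v h2 hv b)
  | dia ψ ih =>
    intro k v hk hv b
    have h1 : ψ.md + (k + 1) ≤ m := by simp only [Fml.md] at hk; omega
    refine exists_congr fun v' => and_congr_right fun hR => ?_
    exact ih (k+1) v' h1 ((M.reachN_succ_iff k w v').2 ⟨v, hv, hR⟩) b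
  | countLe c ψ ih =>
    intro k v hk hv b
    have h1 : ψ.md + k ≤ m := by simp only [Fml.md] at hk; omega
    have hkm : k ≤ m := by omega
    have hvA : M.I v E = A := hIE k v hkm hv
    have hAsub : A ⊆ M.dom v := hvA ▸ M.Isub v E
    rw [relE, KModel.sat_countLe, KModel.sat_countLe]
    have hset : {d : (restrModel M A hne).D |
          d ∈ (restrModel M A hne).dom v ∧ (restrModel M A hne).sat ψ v d}
        = {d : ↥A | M.sat (relE E ψ) v (d : M.D)} := by
      ext d
      simp only [Set.mem_setOf_eq]
      constructor
      · rintro ⟨-, hs⟩; exact (ih k v h1 hv d).1 hs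
      · intro hs; exact ⟨trivial, (ih k v h1 hv d).2 hs⟩
    rw [hset, encard_subtype_setOf]
    have hset2 : {d : M.D | d ∈ A ∧ M.sat (relE E ψ) v d}
        = {d : M.D | d ∈ M.dom v ∧ M.sat (Fml.conj (Fml.atom E) (relE E ψ)) v d} := by
      ext d
      simp only [Set.mem_setOf_eq, KModel.sat_conj, KModel.sat_atom, hvA]
      constructor
      · rintro ⟨hA, hs⟩; exact ⟨hAsub hA, hA, hs⟩
      · rintro ⟨-, hA, hs⟩; exact ⟨hA, hs⟩
    rw [hset2]

lemma E_const (M : KModel) (hdec : M.decDom) (E m : ℕ) (w : M.W) (a : M.D)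
    (hexp : M.sat (zetaExp E m) w a) (hzd : M.sat (zetaDec E m) w a) :
    ∀ k, k ≤ m → ∀ v, M.reachN k w v → M.I v E = M.I w E := by
  have Hexp : ∀ k, k ≤ m → ∀ u, M.reachN k w u → ∀ b ∈ M.dom u,
      b ∈ M.I u E → ∀ v, M.R u v → b ∈ M.I v E := by
    intro k hk u hu b hb hbE v huv
    have h1 := (M.sat_boxLe m).1 hexp k hk u hu
    have h2 := (M.sat_fal).1 h1 b hb
    have h3 := (M.sat_imp).1 h2 hbE
    exact (M.sat_box).1 h3 v huv
  have Hdec : ∀ b ∈ M.dom w, ∀ k, k ≤ m → ∀ u, M.reachN k w u →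
      (∃ v, M.R u v ∧ b ∈ M.I v E) → b ∈ M.I u E := by
    intro b hb k hk u hu hex
    have h1 := (M.sat_fal).1 hzd b hb
    have h2 := (M.sat_boxLe m).1 h1 k hk u hu
    exact (M.sat_imp).1 h2 hex
  intro k
  induction k with
  | zero =>
    intro _ v hv
    have hv' : v = w := hv
    rw [hv']
  | succ k ih =>
    intro hk v hv
    rcases (M.reachN_succ_iff k w v).1 hv with ⟨u, hu, huv⟩
    have hIu := ih (by omega) u hu
    ext b
    constructor
    · intro hbv
      have hbw : b ∈ M.dom w := (M.reachN_dom_subset hdec (k+1) w v hv) (M.Isub v E hbv)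
      have hbu := Hdec b hbw k (by omega) u hu ⟨v, huv, hbv⟩
      rwa [hIu] at hbu
    · intro hbw
      have hbu : b ∈ M.I u E := by rw [hIu]; exact hbw
      exact Hexp k (by omega) u hu b (M.Isub u E hbu) hbu v huv
/-- given a bound N ≥ 1 on the domain size needed for constant-domain
satisfiability of φ, φ is satisfiable with respect to QK iff `E(x) ∧ ζ ∧ φ^E` is
satisfiable with respect to QK^dec. -/
theorem stmt_8 (φ : Fml) (E P₀ : ℕ) (hE : E ∉ φ.preds) (N : ℕ) (hN1 : 1 ≤ N)
    (hN : satQK φ → ∃ M : KModel, M.constDom ∧ Finite M.D ∧ Nat.card M.D ≤ N ∧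
      ∃ w a, a ∈ M.dom w ∧ M.sat φ w a) :
    satQK φ ↔
      satQKdec (Fml.conj (Fml.atom E) (Fml.conj (zeta78 E P₀ φ.md N) (relE E φ))) := by
  constructor
  · intro hsat
    obtain ⟨M, hconst, hfin, hcard, w, a, ha, hφ⟩ := hN hsat
    haveI : Finite M.D := hfin
    have hdom : ∀ v, M.dom v = M.dom w := fun v => hconst v w
    have hnes : (M.dom w).Nonempty := ⟨a, ha⟩
    haveI : Finite ↥(M.dom w) := Subtype.finite
    have hks : Nat.card ↥(M.dom w) ≤ N :=
      le_trans (Nat.card_le_card_of_injective Subtype.val Subtype.val_injective) hcard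
    set j := N - Nat.card ↥(M.dom w) with hj
    set MM := padModel M E (M.dom w) hnes j with hMM
    have hrange : ∀ u : MM.W, MM.I u E = Set.range Sum.inl :=
      fun u => padModel_I_E M E (M.dom w) hnes j u
    have hfj : Nat.card (Fin j) = j := by simp [Nat.card_eq_fintype_card]
    have hcardD : Nat.card MM.D = N := by
      show Nat.card (↥(M.dom w) ⊕ Fin j) = N
      rw [Nat.card_sum, hfj]
      omega
    haveI : Finite MM.D := inferInstanceAs (Finite (↥(M.dom w) ⊕ Fin j))
    have hencU : (Set.univ : Set MM.D).encard = (N : ℕ∞) := by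
      rw [Set.encard_univ, ENat.card_eq_coe_natCard, hcardD]
    refine ⟨MM, fun u v _ => subset_rfl, w, Sum.inl ⟨a, ha⟩, trivial, ?_⟩
    rw [MM.sat_conj, MM.sat_conj, zeta78, MM.sat_conj, MM.sat_conj]
    refine ⟨?_, ⟨?_, ?_, ?_⟩, ?_⟩
    · rw [MM.sat_atom, hrange]
      exact ⟨_, rfl⟩
    · -- zetaExp
      rw [zetaExp, MM.sat_boxLe]
      intro k _ v _
      rw [MM.sat_fal]
      intro b _
      rw [MM.sat_imp]
      intro hbE
      rw [MM.sat_box]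
      intro v' _
      rw [MM.sat_atom, hrange] at hbE ⊢
      exact hbE
    · -- zetaDec
      rw [zetaDec, MM.sat_fal]
      intro b _
      rw [MM.sat_boxLe]
      intro k _ v _
      rw [MM.sat_imp]
      intro hdia
      rw [MM.sat_dia] at hdia
      obtain ⟨v', -, hbE⟩ := hdia
      rw [MM.sat_atom, hrange] at hbE ⊢
      exact hbE
    · -- zetaSize
      rw [zetaSize, MM.sat_fal]
      intro b _
      rw [MM.sat_boxLe]
      intro k _ v _
      rw [MM.sat_fal]
      intro b' _
      have hU : {d : MM.D | d ∈ MM.dom v ∧ MM.sat (topP P₀) v d} = Set.univ :=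
        Set.eq_univ_of_forall fun d => ⟨trivial, MM.sat_topP P₀ v d⟩
      rw [MM.sat_conj]
      constructor
      · rw [MM.sat_countLe, hU, hencU]
      · rw [MM.sat_neg', MM.sat_countLe, hU, hencU]
        intro hle
        have hNN : N ≤ N - 1 := (Nat.cast_le (α := ℕ∞)).1 hle
        omega
    · exact (padModel_sat M E (M.dom w) hnes j hdom φ hE w ⟨a, ha⟩).2 hφ
  · rintro ⟨M, hdec, w, a, _, hsat⟩
    have h1 := (M.sat_conj).1 hsat
    have hEa : a ∈ M.I w E := h1.1
    have h2 := (M.sat_conj).1 h1.2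
    have hr := h2.2
    rw [zeta78] at h2
    have h3 := (M.sat_conj).1 h2.1
    have hexp := h3.1
    have hzd := ((M.sat_conj).1 h3.2).1
    have hIE : ∀ k v, k ≤ φ.md → M.reachN k w v → M.I v E = M.I w E :=
      fun k v hk hv => E_const M hdec E φ.md w a hexp hzd k hk v hv
    refine ⟨restrModel M (M.I w E) ⟨a, hEa⟩, fun u v => rfl, w, ⟨a, hEa⟩, trivial, ?_⟩
    exact (restrModel_sat M (M.I w E) ⟨a, hEa⟩ E φ.md w hIE φ 0 w (by omega) rfl
      ⟨a, hEa⟩).2 hr
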